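/- Fix an integer N ≥ 2, a real p with 0 < p < 1, q = 1 − p, and a strategy S. If L : {0,…,N} → ℝ satisfies L(0) = 0, L(N) = 0, and L(i) = q·L(i − S(i)) + p·L(i + S(i)) + 1 for all 1 ≤ i ≤ N − 1, then L(i) ≥ 0 for every 0 ≤ i ≤ N, and moreover L(i) ≥ 1 for every 1 ≤ i ≤ N − 1. -/
import Mathlib


/-- Any solution of the expected-duration system for a stationary strategy `S`
is nonnegative on `{0,…,N}`, and is `≥ 1` on the interior states `1 ≤ i ≤ N-1`. -/
theorem expected_duration_system_nonneg
    (N : ℕ) (hN : 2 ≤ N) (p q : ℝ)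
    (hp0 : 0 < p) (hp1 : p < 1) (hq : q = 1 - p)
    (S : ℕ → ℕ)
    (hS : ∀ i : ℕ, 1 ≤ i → i ≤ N - 1 → 1 ≤ S i ∧ S i ≤ min i (N - i))
    (L : ℕ → ℝ) (h0 : L 0 = 0) (hNval : L N = 0)
    (hrec : ∀ i : ℕ, 1 ≤ i → i ≤ N - 1 →
      L i = q * L (i - S i) + p * L (i + S i) + 1) :
    (∀ i : ℕ, i ≤ N → 0 ≤ L i) ∧
    (∀ i : ℕ, 1 ≤ i → i ≤ N - 1 → 1 ≤ L i) := by
  have hq0 : 0 ≤ q := by rw [hq]; linarith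
  have key : ∀ i : ℕ, i ≤ N → 0 ≤ L i := by
    by_contra h
    push_neg at h
    obtain ⟨j, hjN, hj⟩ := h
    have hne : (Finset.range (N + 1)).Nonempty := ⟨0, by simp⟩
    obtain ⟨i, hi, hmin⟩ := Finset.exists_min_image (Finset.range (N + 1)) L hne
    simp only [Finset.mem_range] at hi
    have hmj : L i ≤ L j := hmin j (Finset.mem_range.mpr (by omega))
    have hmi : L i < 0 := lt_of_le_of_lt hmj hj
    have h1 : 1 ≤ i := by
      rcases Nat.eq_zero_or_pos i with h' | h'
      · rw [h', h0] at hmi; linarith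
      · exact h'
    have h2 : i ≤ N - 1 := by
      by_contra h'
      have hiN : i = N := by omega
      rw [hiN, hNval] at hmi; linarith
    obtain ⟨hS1, hS2⟩ := hS i h1 h2
    have ha : i - S i < N + 1 := by omega
    have hb : i + S i < N + 1 := by omega
    have hla := hmin _ (Finset.mem_range.mpr ha)
    have hlb := hmin _ (Finset.mem_range.mpr hb)
    have hrec' := hrec i h1 h2
    have hql : q * L i ≤ q * L (i - S i) := mul_le_mul_of_nonneg_left hla hq0
    have hpl : p * L i ≤ p * L (i + S i) := mul_le_mul_of_nonneg_left hlb hp0.le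
    rw [hq] at hrec'
    nlinarith
  refine ⟨key, ?_⟩
  intro i h1 h2
  obtain ⟨hS1, hS2⟩ := hS i h1 h2
  have ha := key (i - S i) (by omega)
  have hb := key (i + S i) (by omega)
  have hq' := mul_nonneg hq0 ha
  have hp' := mul_nonneg hp0.le hb
  rw [hrec i h1 h2]
  linarith
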